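/- arXiv:2403.18773 — 6 statements merged into one kernel-verified Lean document; each statement's English description precedes it below -/
import Mathlib

section
/- Let A be a unital associative algebra with unit 1, M an A-bimodule, and (F,G,H) a triple of maps from A to M with F linear satisfying F(ab) = G(a)b + aH(b) for all a,b in A. Then the maps a ↦ G(a)·1 and a ↦ 1·H(a) are linear, and F(ab) = (G(a)·1)b + a(1·H(b)) for all a,b in A. -/
/-- If `A` is a unital associative algebra, `M` an `A`-bimodule, `F` linear and
`F (a*b) = G a • b + a • H b` for all `a, b`, then `a ↦ G a · 1` and `a ↦ 1 · H a` are linear,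
and `F (a*b) = (G a · 1) · b + a · (1 · H b)`. -/
theorem stmt_0 {A M : Type*} [Ring A] [Algebra ℂ A]
    [AddCommGroup M] [Module ℂ M] [Module A M] [Module Aᵐᵒᵖ M]
    [SMulCommClass A Aᵐᵒᵖ M] [IsScalarTower ℂ A M] [IsScalarTower ℂ Aᵐᵒᵖ M]
    (F : A →ₗ[ℂ] M) (G H : A → M)
    (hFGH : ∀ a b : A, F (a * b) = MulOpposite.op b • G a + a • H b) :
    (∃ G1 : A →ₗ[ℂ] M, ∀ a : A, G1 a = MulOpposite.op (1 : A) • G a) ∧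
    (∃ H1 : A →ₗ[ℂ] M, ∀ a : A, H1 a = (1 : A) • H a) ∧
    (∀ a b : A, F (a * b) =
      MulOpposite.op b • (MulOpposite.op (1 : A) • G a) + a • ((1 : A) • H b)) := by
  have hG : ∀ a : A, MulOpposite.op (1 : A) • G a = F a - a • H 1 := by
    intro a
    have := hFGH a 1
    rw [mul_one] at this
    rw [this]; abel
  have hH : ∀ b : A, (1 : A) • H b = F b - MulOpposite.op b • G 1 := by
    intro b
    have := hFGH 1 b
    rw [one_mul] at this
    rw [this]; abel
  refine ⟨⟨{ toFun := fun a => F a - a • H 1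
             map_add' := by intro x y; simp [add_smul]; abel
             map_smul' := by intro c x; simp [smul_smul, smul_sub, smul_assoc] },
           fun a => (hG a).symm⟩,
          ⟨{ toFun := fun b => F b - MulOpposite.op b • G 1
             map_add' := by intro x y; simp [add_smul]; abel
             map_smul' := by
               intro c x
               simp only [LinearMap.map_smul, RingHom.id_apply, smul_sub]
               congr 1
               rw [MulOpposite.op_smul, smul_assoc] },
           fun b => (hH b).symm⟩, ?_⟩
  intro a b
  rw [smul_smul, smul_smul, ← MulOpposite.op_mul, one_mul, mul_one, hFGH]
end

section
/- Let A be an algebra, M an A-bimodule with trivial right modular annihilator (m ∈ M and Am = 0 implies m = 0), and (F,G,H) a triple with F linear satisfying F(ab) = G(a)b + aH(b) for all a,b ∈ A. Then H is linear. Dually, if the left modular annihilator of A in M is trivial (mA = 0 implies m = 0), then G is linear. -/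
/-- trivial right modular annihilator forces `H` linear; trivial left
modular annihilator forces `G` linear. -/
theorem stmt_4 {A M : Type*} [Ring A] [Algebra ℂ A]
    [AddCommGroup M] [Module ℂ M] [Module A M] [Module Aᵐᵒᵖ M]
    [SMulCommClass A Aᵐᵒᵖ M] [IsScalarTower ℂ A M] [IsScalarTower ℂ Aᵐᵒᵖ M]
    (F : A →ₗ[ℂ] M) (G H : A → M)
    (hFGH : ∀ a b : A, F (a * b) = MulOpposite.op b • G a + a • H b) :
    ((∀ m : M, (∀ a : A, a • m = 0) → m = 0) → ∃ Hl : A →ₗ[ℂ] M, ⇑Hl = H) ∧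
    ((∀ m : M, (∀ a : A, MulOpposite.op a • m = 0) → m = 0) → ∃ Gl : A →ₗ[ℂ] M, ⇑Gl = G) := by
  have comm : ∀ (a : A) (c : ℂ) (m : M), a • (c • m) = c • (a • m) := by
    intro a c m
    rw [← algebraMap_smul A c m, ← mul_smul, ← Algebra.commutes, mul_smul, algebraMap_smul]
  have commop : ∀ (a : Aᵐᵒᵖ) (c : ℂ) (m : M), a • (c • m) = c • (a • m) := by
    intro a c m
    rw [← algebraMap_smul Aᵐᵒᵖ c m, ← mul_smul, ← Algebra.commutes, mul_smul, algebraMap_smul]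
  have hH : ∀ a b : A, a • H b = F (a * b) - MulOpposite.op b • G a := by
    intro a b; rw [hFGH a b]; abel
  have hG : ∀ a b : A, MulOpposite.op b • G a = F (a * b) - a • H b := by
    intro a b; rw [hFGH a b]; abel
  constructor
  · intro hR
    refine ⟨⟨⟨H, ?_⟩, ?_⟩, rfl⟩
    · intro b b'
      have : H (b + b') - (H b + H b') = 0 := by
        apply hR
        intro a
        rw [smul_sub, smul_add, hH, hH, hH, mul_add, map_add, MulOpposite.op_add, add_smul]
        abel
      exact sub_eq_zero.mp this
    · intro c b
      have : H (c • b) - c • H b = 0 := by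
        apply hR
        intro a
        rw [smul_sub, hH, comm, hH, mul_smul_comm, map_smul, MulOpposite.op_smul, smul_assoc,
          smul_sub]
        abel
      have := sub_eq_zero.mp this
      simpa using this
  · intro hL
    refine ⟨⟨⟨G, ?_⟩, ?_⟩, rfl⟩
    · intro a a'
      have : G (a + a') - (G a + G a') = 0 := by
        apply hL
        intro b
        rw [smul_sub, smul_add, hG, hG, hG, add_mul, map_add, add_smul]
        abel
      have := sub_eq_zero.mp this
      simpa using this
    · intro c a
      have : G (c • a) - c • G a = 0 := by
        apply hL
        intro b
        rw [smul_sub, hG, commop, hG, smul_mul_assoc, map_smul, smul_assoc, smul_sub]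
        abel
      have := sub_eq_zero.mp this
      simpa using this
end

section
/- Let A be a commutative C*-algebra, M a Banach A-bimodule, and F : A → M a linear map. Define I = {a ∈ A : the map x ↦ F(ax) is continuous}. Suppose F(ab) = G(a)b + aH(b) for all a,b with G,H : A → M arbitrary maps. Then I is a closed (two-sided) ideal of A. -/
open Filter Topology

/-- for a commutative C*-algebra `A` and a generalized derivation of the third
type `F : A → M`, the set `{a : A | x ↦ F (a*x) is continuous}` is a closed ideal of `A`. -/
theorem stmt_8 {A M : Type*} [NormedCommRing A] [StarRing A] [CStarRing A]
    [NormedAlgebra ℂ A] [CompleteSpace A] [StarModule ℂ A]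
    [NormedAddCommGroup M] [NormedSpace ℂ M] [CompleteSpace M]
    [Module A M] [Module Aᵐᵒᵖ M] [SMulCommClass A Aᵐᵒᵖ M]
    [IsScalarTower ℂ A M] [IsScalarTower ℂ Aᵐᵒᵖ M]
    (hbl : ∀ (a : A) (m : M), ‖a • m‖ ≤ ‖a‖ * ‖m‖)
    (hbr : ∀ (a : A) (m : M), ‖MulOpposite.op a • m‖ ≤ ‖a‖ * ‖m‖)
    (F : A →ₗ[ℂ] M) (G H : A → M)
    (hFGH : ∀ a b : A, F (a * b) = MulOpposite.op b • G a + a • H b) :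
    ∃ I : Ideal A, (I : Set A) = {a : A | Continuous fun x : A => F (a * x)} ∧
      IsClosed (I : Set A) := by
  -- the right-action by `op x` on a fixed `m`, as a continuous linear map in `x`
  have Rlin : ∀ m : M, ∃ L : A →L[ℂ] M, ∀ x : A, L x = MulOpposite.op x • m := by
    intro m
    refine ⟨LinearMap.mkContinuous
      { toFun := fun x => MulOpposite.op x • m
        map_add' := fun x y => by
          show MulOpposite.op (x + y) • m = _
          rw [MulOpposite.op_add, add_smul]
        map_smul' := fun c x => by
          show MulOpposite.op (c • x) • m = c • MulOpposite.op x • m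
          rw [MulOpposite.op_smul, smul_assoc] } ‖m‖ (fun x => by
          simpa [mul_comm] using hbr x m), fun x => rfl⟩
  refine ⟨{ carrier := {a : A | Continuous fun x : A => F (a * x)}
            add_mem' := ?_
            zero_mem' := ?_
            smul_mem' := ?_ }, rfl, ?_⟩
  · intro a b ha hb
    have : (fun x : A => F ((a + b) * x)) =
        fun x => F (a * x) + F (b * x) := by
      funext x; rw [add_mul, map_add]
    rw [Set.mem_setOf_eq, this]
    exact ha.add hb
  · simpa [Set.mem_setOf_eq] using continuous_const
  · intro r a ha
    have : (fun x : A => F ((r • a) * x)) = (fun y : A => F (a * y)) ∘ fun x => r * x := by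
      funext x; simp [Function.comp]; ring_nf
    rw [Set.mem_setOf_eq, this]
    exact ha.comp (continuous_const.mul continuous_id)
  · -- closedness via Banach–Steinhaus
    refine IsSeqClosed.isClosed ?_
    intro u a hu hlim
    -- continuous linear maps `x ↦ u n • H x`
    have key : ∀ n, ∃ g : A →L[ℂ] M, ∀ x, g x = u n • H x := by
      intro n
      obtain ⟨L, hL⟩ := Rlin (G (u n))
      refine ⟨⟨(F.comp (LinearMap.mulLeft ℂ (u n))) - L.toLinearMap, ?_⟩, fun x => ?_⟩
      · exact ((hu n).sub L.continuous : Continuous fun x =>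
          F (u n * x) - L x)
      · show F (u n * x) - L x = u n • H x
        rw [hL, hFGH]; abel
    choose g hg using key
    have htend : Tendsto (fun n x => g n x) atTop (𝓝 fun x => a • H x) := by
      rw [tendsto_pi_nhds]
      intro x
      simp only [hg]
      have : Tendsto (fun n => ‖u n • H x - a • H x‖) atTop (𝓝 0) := by
        have hb : ∀ n, ‖u n • H x - a • H x‖ ≤ ‖u n - a‖ * ‖H x‖ := fun n => by
          rw [← sub_smul]; exact hbl _ _
        have h0 : Tendsto (fun n => ‖u n - a‖ * ‖H x‖) atTop (𝓝 0) := by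
          have := (tendsto_sub_nhds_zero_iff.mpr hlim).norm
          simpa using this.mul_const ‖H x‖
        exact squeeze_zero (fun n => norm_nonneg _) hb h0
      rw [← tendsto_sub_nhds_zero_iff]
      exact tendsto_zero_iff_norm_tendsto_zero.mpr this
    have hgc : Continuous fun x => a • H x := by
      have h2 : ⇑(continuousLinearMapOfTendsto g htend) = fun x => a • H x := rfl
      rw [← h2]; exact (continuousLinearMapOfTendsto g htend).continuous
    show Continuous fun x : A => F (a * x)
    have : (fun x : A => F (a * x)) =
        fun x => MulOpposite.op x • G a + a • H x := by
      funext x; exact hFGH a x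
    rw [this]
    obtain ⟨L, hL⟩ := Rlin (G a)
    have : Continuous fun x : A => MulOpposite.op x • G a :=
      L.continuous.congr hL
    exact this.add hgc
end

section
/- Let A be a C*-algebra, M a Banach A-bimodule with trivial left and right modular annihilators, and (F,G,H) a triple of maps from A to M with F linear satisfying F(ab) = G(a)b + aH(b) for all a,b ∈ A. If F is continuous, then G and H are linear and continuous. -/
open MulOpposite Filter Topology

/-- if the bimodule has trivial left and right modular annihilators and `F` is
continuous, then `G` and `H` are linear and continuous. -/
theorem stmt_10 {A M : Type*} [NormedRing A] [StarRing A] [CStarRing A]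
    [NormedAlgebra ℂ A] [CompleteSpace A] [StarModule ℂ A]
    [NormedAddCommGroup M] [NormedSpace ℂ M] [CompleteSpace M]
    [Module A M] [Module Aᵐᵒᵖ M] [SMulCommClass A Aᵐᵒᵖ M]
    [IsScalarTower ℂ A M] [IsScalarTower ℂ Aᵐᵒᵖ M]
    (hbl : ∀ (a : A) (m : M), ‖a • m‖ ≤ ‖a‖ * ‖m‖)
    (hbr : ∀ (a : A) (m : M), ‖MulOpposite.op a • m‖ ≤ ‖a‖ * ‖m‖)
    (hrann : ∀ m : M, (∀ a : A, a • m = 0) → m = 0)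
    (hlann : ∀ m : M, (∀ a : A, MulOpposite.op a • m = 0) → m = 0)
    (F : A →ₗ[ℂ] M) (G H : A → M)
    (hFGH : ∀ a b : A, F (a * b) = MulOpposite.op b • G a + a • H b)
    (hFc : Continuous F) :
    (∃ Gl : A →ₗ[ℂ] M, ⇑Gl = G) ∧ Continuous G ∧
    (∃ Hl : A →ₗ[ℂ] M, ⇑Hl = H) ∧ Continuous H := by
  -- scalar commutation helpers
  have hcl : ∀ (c : ℂ) (a : A) (m : M), a • (c • m) = c • (a • m) := by
    intro c a m
    calc a • (c • m) = a • ((c • (1 : A)) • m) := by rw [smul_assoc, one_smul]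
      _ = (a * (c • (1 : A))) • m := (mul_smul _ _ _).symm
      _ = (c • (a * 1)) • m := by rw [mul_smul_comm]
      _ = c • (a • m) := by rw [mul_one, smul_assoc]
  have hcr : ∀ (c : ℂ) (b : A) (m : M), op b • (c • m) = c • (op b • m) := by
    intro c b m
    calc op b • (c • m) = op b • ((c • (1 : Aᵐᵒᵖ)) • m) := by rw [smul_assoc, one_smul]
      _ = (op b * (c • (1 : Aᵐᵒᵖ))) • m := (mul_smul _ _ _).symm
      _ = (c • (op b * 1)) • m := by rw [mul_smul_comm]
      _ = c • (op b • m) := by rw [mul_one, smul_assoc]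
  -- rearranged fundamental identity
  have key : ∀ a b : A, a • H b = F (a * b) - op b • G a := by
    intro a b
    rw [hFGH a b]; abel
  have keyG : ∀ a b : A, op b • G a = F (a * b) - a • H b := by
    intro a b
    rw [hFGH a b]; abel
  -- H is additive
  have hHadd : ∀ b c : A, H (b + c) = H b + H c := by
    intro b c
    have h0 : ∀ a : A, a • (H (b + c) - (H b + H c)) = 0 := by
      intro a
      have hF : F (a * (b + c)) = F (a * b) + F (a * c) := by rw [mul_add, map_add]
      rw [smul_sub, smul_add, key a (b + c), key a b, key a c, hF, op_add, add_smul]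
      abel
    have := hrann _ h0
    rwa [sub_eq_zero] at this
  -- H is homogeneous
  have hHsmul : ∀ (c : ℂ) (b : A), H (c • b) = c • H b := by
    intro c b
    have h0 : ∀ a : A, a • (H (c • b) - c • H b) = 0 := by
      intro a
      have hF : F (a * (c • b)) = c • F (a * b) := by rw [mul_smul_comm, map_smul]
      rw [smul_sub, key a (c • b), hF, op_smul, smul_assoc, hcl, key a b, smul_sub]
      abel
    have := hrann _ h0
    rwa [sub_eq_zero] at this
  -- G is additive
  have hGadd : ∀ a a' : A, G (a + a') = G a + G a' := by
    intro a a'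
    have h0 : ∀ b : A, op b • (G (a + a') - (G a + G a')) = 0 := by
      intro b
      have hF : F ((a + a') * b) = F (a * b) + F (a' * b) := by rw [add_mul, map_add]
      rw [smul_sub, smul_add, keyG (a + a') b, keyG a b, keyG a' b, hF, add_smul]
      abel
    have := hlann _ h0
    rwa [sub_eq_zero] at this
  -- G is homogeneous
  have hGsmul : ∀ (c : ℂ) (a : A), G (c • a) = c • G a := by
    intro c a
    have h0 : ∀ b : A, op b • (G (c • a) - c • G a) = 0 := by
      intro b
      have hF : F ((c • a) * b) = c • F (a * b) := by rw [smul_mul_assoc, map_smul]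
      rw [smul_sub, keyG (c • a) b, hF, smul_assoc, hcr, keyG a b, smul_sub]
      abel
    have := hlann _ h0
    rwa [sub_eq_zero] at this
  -- linear map versions
  let Hl : A →ₗ[ℂ] M := { toFun := H, map_add' := hHadd, map_smul' := hHsmul }
  let Gl : A →ₗ[ℂ] M := { toFun := G, map_add' := hGadd, map_smul' := hGsmul }
  -- continuity of multiplication-type maps
  have hLcont : ∀ a : A, Continuous fun m : M => a • m := by
    intro a
    refine (LipschitzWith.of_dist_le_mul (K := ‖a‖₊) fun m m' => ?_).continuous
    rw [dist_eq_norm, dist_eq_norm, ← smul_sub]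
    exact hbl a (m - m')
  have hRcont : ∀ m : M, Continuous fun b : A => op b • m := by
    intro m
    refine (LipschitzWith.of_dist_le_mul (K := ‖m‖₊) fun b b' => ?_).continuous
    rw [dist_eq_norm, dist_eq_norm]
    have : op b • m - op b' • m = op (b - b') • m := by
      rw [op_sub, sub_smul]
    rw [this, mul_comm]
    exact hbr (b - b') m
  have hOcont : ∀ b : A, Continuous fun m : M => op b • m := by
    intro b
    refine (LipschitzWith.of_dist_le_mul (K := ‖b‖₊) fun m m' => ?_).continuous
    rw [dist_eq_norm, dist_eq_norm, ← smul_sub]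
    exact hbr b (m - m')
  have hLcont' : ∀ m : M, Continuous fun a : A => a • m := by
    intro m
    refine (LipschitzWith.of_dist_le_mul (K := ‖m‖₊) fun a a' => ?_).continuous
    rw [dist_eq_norm, dist_eq_norm, ← sub_smul, mul_comm]
    exact hbl (a - a') m
  -- continuity of H via the closed graph theorem
  have hHc : Continuous Hl := by
    apply Hl.continuous_of_seq_closed_graph
    intro u x y hu hy
    have h0 : ∀ a : A, a • (y - H x) = 0 := by
      intro a
      have t1 : Tendsto (fun n => a • (H (u n))) atTop (𝓝 (a • y)) :=
        ((hLcont a).tendsto y).comp hy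
      have t2 : Tendsto (fun n => F (a * u n) - op (u n) • G a) atTop
          (𝓝 (F (a * x) - op x • G a)) := by
        refine Tendsto.sub ?_ (((hRcont (G a)).tendsto x).comp hu)
        exact (hFc.tendsto _).comp (((continuous_mul_left a).tendsto x).comp hu)
      have heq : (fun n => a • (H (u n))) = fun n => F (a * u n) - op (u n) • G a := by
        funext n; exact key a (u n)
      rw [heq] at t1
      have := tendsto_nhds_unique t1 t2
      rw [smul_sub, this, key a x]
      abel
    have := hrann _ h0
    rwa [sub_eq_zero] at this
  -- continuity of G via the closed graph theorem
  have hGc : Continuous Gl := by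
    apply Gl.continuous_of_seq_closed_graph
    intro u x y hu hy
    have h0 : ∀ b : A, op b • (y - G x) = 0 := by
      intro b
      have t1 : Tendsto (fun n => op b • (G (u n))) atTop (𝓝 (op b • y)) :=
        ((hOcont b).tendsto y).comp hy
      have t2 : Tendsto (fun n => F (u n * b) - (u n) • H b) atTop
          (𝓝 (F (x * b) - x • H b)) := by
        refine Tendsto.sub ?_ (((hLcont' (H b)).tendsto x).comp hu)
        exact (hFc.tendsto _).comp (((continuous_mul_right b).tendsto x).comp hu)
      have heq : (fun n => op b • (G (u n))) = fun n => F (u n * b) - (u n) • H b := by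
        funext n; exact keyG (u n) b
      rw [heq] at t1
      have := tendsto_nhds_unique t1 t2
      rw [smul_sub, this, keyG x b]
      abel
    have := hlann _ h0
    rwa [sub_eq_zero] at this
  exact ⟨⟨Gl, rfl⟩, hGc, ⟨Hl, rfl⟩, hHc⟩
end

section
/- Let A be a C*-algebra, M a Banach A-bimodule, and suppose F : A → M is linear, continuous, and there exist maps G, H : A → M with F(ab) = G(a)b + aH(b) for all a,b ∈ A. Then for all a, b, c ∈ A with a, b, c self-adjoint and ab = bc = 0, one has aF(b)c = 0. -/
open MulOpposite in
/-- if `F` is a continuous generalized derivation of the third type from a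
C*-algebra `A` into a Banach `A`-bimodule, then `a F(b) c = 0` whenever `a, b, c` are
self-adjoint with `ab = bc = 0`. -/
theorem stmt_16 {A M : Type*} [NormedRing A] [StarRing A] [CStarRing A]
    [NormedAlgebra ℂ A] [CompleteSpace A] [StarModule ℂ A]
    [NormedAddCommGroup M] [NormedSpace ℂ M] [CompleteSpace M]
    [Module A M] [Module Aᵐᵒᵖ M] [SMulCommClass A Aᵐᵒᵖ M]
    [IsScalarTower ℂ A M] [IsScalarTower ℂ Aᵐᵒᵖ M]
    (hbl : ∀ (a : A) (m : M), ‖a • m‖ ≤ ‖a‖ * ‖m‖)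
    (hbr : ∀ (a : A) (m : M), ‖MulOpposite.op a • m‖ ≤ ‖a‖ * ‖m‖)
    (F : A →ₗ[ℂ] M) (hFc : Continuous F) (G H : A → M)
    (hFGH : ∀ a b : A, F (a * b) = MulOpposite.op b • G a + a • H b) :
    ∀ a b c : A, IsSelfAdjoint a → IsSelfAdjoint b → IsSelfAdjoint c →
      a * b = 0 → b * c = 0 → a • (MulOpposite.op c • F b) = 0 := by
  intro a b c ha hb hc hab hbc
  letI : CStarAlgebra A :=
    { ‹NormedRing A›, ‹StarRing A›, ‹CStarRing A›, ‹NormedAlgebra ℂ A›,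
      ‹StarModule ℂ A›, ‹CompleteSpace A› with }
  -- the key computation: `a • (op c • F (x * x)) = 0` when `a * x = 0` and `x * c = 0`
  have key : ∀ x : A, a * x = 0 → x * c = 0 → a • ((op c : Aᵐᵒᵖ) • F (x * x)) = 0 := by
    intro x hax hxc
    rw [hFGH x x, smul_add, smul_add]
    have h1 : (op c : Aᵐᵒᵖ) • (op x • G x) = (0 : M) := by
      rw [← mul_smul, ← op_mul, hxc, op_zero, zero_smul]
    have h2 : a • ((op c : Aᵐᵒᵖ) • (x • H x)) = (0 : M) := by
      rw [smul_comm a (op c), ← mul_smul, hax, zero_smul, smul_zero]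
    rw [h1, smul_zero, h2, add_zero]
  -- set up the nonunital continuous functional calculus for `b`
  set s : Set ℝ := quasispectrum ℝ b with hs
  have hcs : CompactSpace s :=
    isCompact_iff_compactSpace.mp
      (NonUnitalContinuousFunctionalCalculus.isCompact_quasispectrum (R := ℝ) b)
  have h0 : ((0 : s) : ℝ) = 0 := rfl
  set φ : ContinuousMapZero s ℝ →⋆ₙₐ[ℝ] A := cfcₙHom (R := ℝ) hb with hφ
  have hφc : Continuous φ := cfcₙHom_continuous hb
  have hφid : φ (ContinuousMapZero.id s) = b := cfcₙHom_id (R := ℝ) hb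
  -- any element of the form `φ f` is killed by `a` on the left and `c` on the right
  have hleft : ∀ f : ContinuousMapZero s ℝ, a * φ f = 0 := by
    intro f
    refine ContinuousMapZero.mul_nonUnitalStarAlgHom_apply_eq_zero φ a ?_ ?_ hφc f
    · rw [hφid]; exact hab
    · rw [star_trivial, hφid]; exact hab
  have hright : ∀ f : ContinuousMapZero s ℝ, φ f * c = 0 := by
    intro f
    refine ContinuousMapZero.nonUnitalStarAlgHom_apply_mul_eq_zero φ c ?_ ?_ hφc f
    · rw [hφid]; exact hbc
    · rw [star_trivial, hφid]; exact hbc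
  -- square roots of the positive and negative parts
  set gp : ContinuousMapZero s ℝ :=
    ⟨⟨fun x => Real.sqrt ((x : ℝ)⁺), by fun_prop⟩, by simp [h0]⟩ with hgp
  set gn : ContinuousMapZero s ℝ :=
    ⟨⟨fun x => Real.sqrt ((x : ℝ)⁻), by fun_prop⟩, by simp [h0]⟩ with hgn
  have hdecomp : gp * gp - gn * gn = ContinuousMapZero.id s := by
    ext x
    show Real.sqrt ((x : ℝ)⁺) * Real.sqrt ((x : ℝ)⁺) -
      Real.sqrt ((x : ℝ)⁻) * Real.sqrt ((x : ℝ)⁻) = (x : ℝ)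
    rw [Real.mul_self_sqrt (posPart_nonneg _), Real.mul_self_sqrt (negPart_nonneg _),
      posPart_sub_negPart]
  have hb_eq : b = φ gp * φ gp - φ gn * φ gn := by
    rw [← map_mul, ← map_mul, ← map_sub, hdecomp, hφid]
  rw [hb_eq, map_sub, smul_sub, smul_sub,
    key (φ gp) (hleft gp) (hright gp), key (φ gn) (hleft gn) (hright gn), sub_zero]
end

section
/- Let A be a C*-algebra and b ∈ A self-adjoint, a, c ∈ A self-adjoint with ab = bc = 0. Then there exists d ∈ A with d² = b, ad = 0, and dc = 0. -/
open scoped ContinuousMapZero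

/-- If `a * b = b * a = 0` with `b` self-adjoint, then `a` annihilates every element of the
non-unital continuous functional calculus of `b`, on both sides. -/
lemma ann_cfcn {A : Type*} [CStarAlgebra A]
    (a b : A) (hb : IsSelfAdjoint b) (h1 : a * b = 0) (h2 : b * a = 0)
    (f : ℝ → ℝ) : a * cfcₙ f b = 0 ∧ cfcₙ f b * a = 0 := by
  by_cases hf : ContinuousOn f (quasispectrum ℝ b) ∧ f 0 = 0
  · obtain ⟨hf, hf0⟩ := hf
    suffices H : ∀ g : C(quasispectrum ℝ b, ℝ)₀,
        a * cfcₙHom hb g = 0 ∧ cfcₙHom hb g * a = 0 by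
      rw [cfcₙ_apply f b hf hf0 hb]
      exact H _
    intro g
    set S : Set C(quasispectrum ℝ b, ℝ)₀ :=
      {g | a * cfcₙHom hb g = 0 ∧ cfcₙHom hb g * a = 0} with hS
    have hclosed : IsClosed S := by
      apply IsClosed.inter
      · exact isClosed_eq (continuous_const.mul (cfcₙHom_continuous hb)) continuous_const
      · exact isClosed_eq ((cfcₙHom_continuous hb).mul continuous_const) continuous_const
    have hadj : (NonUnitalStarAlgebra.adjoin ℝ
        {(ContinuousMapZero.id (quasispectrum ℝ b) : C(quasispectrum ℝ b, ℝ)₀)} : Set _) ⊆ S := by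
      rintro g hg
      induction hg using NonUnitalStarAlgebra.adjoin_induction with
      | mem x hx =>
        simp only [Set.mem_singleton_iff] at hx
        subst hx
        have hid : cfcₙHom hb (ContinuousMapZero.id (quasispectrum ℝ b)) = b :=
          cfcₙHom_id hb
        rw [hS, Set.mem_setOf_eq, hid]
        exact ⟨h1, h2⟩
      | add x y hx hy px py =>
        rw [hS, Set.mem_setOf_eq, map_add]
        exact ⟨by rw [mul_add, px.1, py.1, add_zero],
          by rw [add_mul, px.2, py.2, add_zero]⟩
      | zero => simp [hS]
      | mul x y hx hy px py =>
        rw [hS, Set.mem_setOf_eq, map_mul]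
        exact ⟨by rw [← mul_assoc, px.1, zero_mul],
          by rw [mul_assoc, py.2, mul_zero]⟩
      | smul r x hx px =>
        rw [hS, Set.mem_setOf_eq, map_smul]
        exact ⟨by rw [mul_smul_comm, px.1, smul_zero],
          by rw [smul_mul_assoc, px.2, smul_zero]⟩
      | star x hx px =>
        have : star x = x := by
          ext t
          exact star_trivial _
        rw [this]
        exact px
    have hdense := ContinuousMapZero.adjoin_id_dense (quasispectrum ℝ b)
    have hsub : closure (NonUnitalStarAlgebra.adjoin ℝ
        {(ContinuousMapZero.id (quasispectrum ℝ b) : C(quasispectrum ℝ b, ℝ)₀)} : Set _) ⊆ S :=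
      closure_minimal hadj hclosed
    exact hsub (hdense.closure_eq ▸ Set.mem_univ g)
  · rw [not_and_or] at hf
    rcases hf with hf | hf
    · rw [cfcₙ_apply_of_not_continuousOn b hf]
      simp
    · rw [cfcₙ_apply_of_not_map_zero b hf]
      simp

/-- for self-adjoint `a, b, c` in a C*-algebra with `ab = bc = 0`, there
exists `d` with `d² = b`, `ad = 0` and `dc = 0`. -/
theorem stmt_17 {A : Type*} [NormedRing A] [StarRing A] [CStarRing A]
    [NormedAlgebra ℂ A] [CompleteSpace A] [StarModule ℂ A]
    (a b c : A) (ha : IsSelfAdjoint a) (hb : IsSelfAdjoint b) (hc : IsSelfAdjoint c)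
    (hab : a * b = 0) (hbc : b * c = 0) :
    ∃ d : A, d ^ 2 = b ∧ a * d = 0 ∧ d * c = 0 := by
  letI : CStarAlgebra A := {}
  have hba : b * a = 0 := by
    have := congrArg star hab
    simpa [star_mul, ha.star_eq, hb.star_eq] using this
  have hcb : c * b = 0 := by
    have := congrArg star hbc
    simpa [star_mul, hb.star_eq, hc.star_eq] using this
  set g : ℝ → ℝ := fun x => Real.sqrt (x ⊔ 0) with hg
  set h : ℝ → ℝ := fun x => Real.sqrt (-x ⊔ 0) with hh
  have hg0 : g 0 = 0 := by simp [hg]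
  have hh0 : h 0 = 0 := by simp [hh]
  have hgc : ContinuousOn g (quasispectrum ℝ b) :=
    (Real.continuous_sqrt.comp (continuous_id.max continuous_const)).continuousOn
  have hhc : ContinuousOn h (quasispectrum ℝ b) :=
    (Real.continuous_sqrt.comp (continuous_neg.max continuous_const)).continuousOn
  refine ⟨cfcₙ g b + Complex.I • cfcₙ h b, ?_, ?_, ?_⟩
  · have hmul0 : cfcₙ g b * cfcₙ h b = 0 := by
      rw [← cfcₙ_mul g h b hgc hg0 hhc hh0]
      have he : (fun x => g x * h x) = (fun _ : ℝ => (0 : ℝ)) := by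
        funext x
        rcases le_total x 0 with hx | hx
        · have : x ⊔ 0 = 0 := sup_eq_right.mpr hx
          simp [hg, this]
        · have : -x ⊔ 0 = 0 := sup_eq_right.mpr (by linarith)
          simp [hh, this]
      rw [he, cfcₙ_const_zero]
    have hmul0' : cfcₙ h b * cfcₙ g b = 0 := by
      rw [← cfcₙ_mul h g b hhc hh0 hgc hg0]
      have he : (fun x => h x * g x) = (fun _ : ℝ => (0 : ℝ)) := by
        funext x
        rcases le_total x 0 with hx | hx
        · have : x ⊔ 0 = 0 := sup_eq_right.mpr hx
          simp [hg, this]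
        · have : -x ⊔ 0 = 0 := sup_eq_right.mpr (by linarith)
          simp [hh, this]
      rw [he, cfcₙ_const_zero]
    have hg2 : cfcₙ g b * cfcₙ g b = cfcₙ (fun x : ℝ => x ⊔ 0) b := by
      rw [← cfcₙ_mul g g b hgc hg0 hgc hg0]
      apply cfcₙ_congr
      intro x _
      exact Real.mul_self_sqrt (le_max_right _ _)
    have hh2 : cfcₙ h b * cfcₙ h b = cfcₙ (fun x : ℝ => -x ⊔ 0) b := by
      rw [← cfcₙ_mul h h b hhc hh0 hhc hh0]
      apply cfcₙ_congr
      intro x _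
      exact Real.mul_self_sqrt (le_max_right _ _)
    have key : cfcₙ (fun x : ℝ => x ⊔ 0) b - cfcₙ (fun x : ℝ => -x ⊔ 0) b = b := by
      rw [← cfcₙ_sub (fun x : ℝ => x ⊔ 0) (fun x : ℝ => -x ⊔ 0) b
        ((continuous_id.max continuous_const).continuousOn) (by simp)
        ((continuous_neg.max continuous_const).continuousOn) (by simp)]
      have he : (fun x => (x ⊔ 0) - (-x ⊔ 0)) = (id : ℝ → ℝ) := by
        funext x
        rcases le_total x 0 with hx | hx
        · have h1 : x ⊔ 0 = 0 := sup_eq_right.mpr hx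
          have h2 : -x ⊔ 0 = -x := sup_eq_left.mpr (by linarith)
          simp [h1, h2]
        · have h1 : x ⊔ 0 = x := sup_eq_left.mpr hx
          have h2 : -x ⊔ 0 = 0 := sup_eq_right.mpr (by linarith)
          simp [h1, h2]
      rw [he, cfcₙ_id ℝ b hb]
    have hI : (Complex.I • cfcₙ h b) * (Complex.I • cfcₙ h b)
        = -(cfcₙ h b * cfcₙ h b) := by
      rw [smul_mul_smul_comm, Complex.I_mul_I, neg_one_smul]
    calc (cfcₙ g b + Complex.I • cfcₙ h b) ^ 2
        = (cfcₙ g b * cfcₙ g b + cfcₙ g b * (Complex.I • cfcₙ h b))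
          + ((Complex.I • cfcₙ h b) * cfcₙ g b
          + (Complex.I • cfcₙ h b) * (Complex.I • cfcₙ h b)) := by
          rw [sq, add_mul, mul_add, mul_add]
      _ = b := by
          rw [hI, mul_smul_comm, hmul0, smul_mul_assoc, hmul0', hg2, hh2]
          simpa [sub_eq_add_neg] using key
  · have h1 := ann_cfcn a b hb hab hba g
    have h2 := ann_cfcn a b hb hab hba h
    rw [mul_add, h1.1, mul_smul_comm, h2.1]
    simp
  · have h1 := ann_cfcn c b hb hcb hbc g
    have h2 := ann_cfcn c b hb hcb hbc h
    rw [add_mul, h1.2, smul_mul_assoc, h2.2]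
    simp
end
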